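/- Let k ≥ 3 and let G be a mono-C3-free edge-colored complete graph K_n. Let ℓ_1 ≥ ℓ_2 ≥ ⋯ ≥ ℓ_k be positive integers with ℓ_1 ≥ 2 and ℓ_1 + ℓ_2 + ⋯ + ℓ_k = n − 1. If G contains a nice octopus O*_{ℓ_2,…,ℓ_k}, then G contains a properly colored spanning k-spider with legs of lengths ℓ_1, ℓ_2, …, ℓ_k. -/

import Mathlib

/-- An edge-coloring of `K_n` (on vertex set `Fin n`) has no monochromatic triangle. -/
def MonoC3Free (n : ℕ) (c : Fin n → Fin n → ℕ) : Prop :=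
  ∀ u v w : Fin n, u ≠ v → v ≠ w → u ≠ w → ¬(c u v = c v w ∧ c u v = c u w)

/-- `(v, L)` is a properly colored spanning `k`-spider in the edge-colored `K_n` with
legs of lengths `ℓ 1, …, ℓ k`: `L i 0, L i 1, …, L i (ℓ i)` is the `i`-th leg
(`1 ≤ i ≤ k`), each leg starts at the center `v`, the legs are internally disjoint and
together cover all `n` vertices, each leg is a properly colored path, and the `k` leg
edges at the center have pairwise distinct colors. -/
def IsPCSpanningSpider (n k : ℕ) (c : Fin n → Fin n → ℕ) (ℓ : ℕ → ℕ)
    (v : Fin n) (L : ℕ → ℕ → Fin n) : Prop :=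
  (∀ i, 1 ≤ i → i ≤ k → L i 0 = v) ∧
  (∀ i, 1 ≤ i → i ≤ k → Set.InjOn (L i) (Set.Iic (ℓ i))) ∧
  (∀ i i', 1 ≤ i → i ≤ k → 1 ≤ i' → i' ≤ k → i ≠ i' →
    ∀ j j', 1 ≤ j → j ≤ ℓ i → 1 ≤ j' → j' ≤ ℓ i' → L i j ≠ L i' j') ∧
  (∀ x : Fin n, ∃ i j, 1 ≤ i ∧ i ≤ k ∧ j ≤ ℓ i ∧ L i j = x) ∧
  (∀ i, 1 ≤ i → i ≤ k → ∀ j : ℕ, j + 2 ≤ ℓ i →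
    c (L i j) (L i (j + 1)) ≠ c (L i (j + 1)) (L i (j + 2))) ∧
  (∀ i i', 1 ≤ i → i ≤ k → 1 ≤ i' → i' ≤ k → i ≠ i' → c v (L i 1) ≠ c v (L i' 1))

namespace PCAux
variable {n : ℕ}

def PCl (c : Fin n → Fin n → ℕ) : List (Fin n) → Prop
  | x :: y :: z :: l => c x y ≠ c y z ∧ PCl c (y :: z :: l)
  | _ => True

@[simp] lemma PCl_nil (c : Fin n → Fin n → ℕ) : PCl c [] := trivial
@[simp] lemma PCl_single (c : Fin n → Fin n → ℕ) (x : Fin n) : PCl c [x] := trivial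
@[simp] lemma PCl_pair (c : Fin n → Fin n → ℕ) (x y : Fin n) : PCl c [x, y] := trivial
@[simp] lemma PCl_cons3 (c : Fin n → Fin n → ℕ) (x y z : Fin n) (l : List (Fin n)) :
    PCl c (x :: y :: z :: l) ↔ c x y ≠ c y z ∧ PCl c (y :: z :: l) := Iff.rfl

lemma insert_one (c : Fin n → Fin n → ℕ) (hsym : ∀ u v, c u v = c v u)
    (hmono : MonoC3Free n c) :
    ∀ (l : List (Fin n)) (x y u : Fin n), u ∉ (x :: y :: l) → (x :: y :: l).Nodup →
    PCl c (x :: y :: l) → c u y ≠ c x y →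
    ∃ l', (u :: l).Perm l' ∧ PCl c (x :: y :: l') := by
  intro l
  induction l with
  | nil =>
    intro x y u _ _ _ hc
    exact ⟨[u], List.Perm.refl _, by
      simp only [PCl_cons3, PCl_pair, and_true]
      rw [hsym y u]; exact fun h => hc h.symm⟩
  | cons z t ih =>
    intro x y u hu hnd hpc hc
    by_cases h : c u z = c y z
    · refine ⟨u :: z :: t, List.Perm.refl _, ?_⟩
      have hxy : c x y ≠ c y z := (hpc).1
      have hyzt : PCl c (y :: z :: t) := (hpc).2
      have hyu : u ≠ y := by simp at hu; tauto
      have hzu : u ≠ z := by simp at hu; tauto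
      have hyz : y ≠ z := by simp at hnd; tauto
      have hyzu : c y z ≠ c y u := by
        intro he
        exact hmono y z u hyz hzu.symm (Ne.symm hyu) ⟨by rw [hsym z u, h], he⟩
      constructor
      · intro he; rw [he] at hxy
        exact hyzu (by rw [← he] at hyzu ⊢; exact (hc (by rw [hsym u y, he])).elim)
      constructor
      · intro he; apply hyzu; rw [he, h]
      · cases t with
        | nil => trivial
        | cons w t' =>
          refine ⟨?_, hyzt.2⟩
          rw [h]; exact hyzt.1
    · obtain ⟨t', hperm, hpc'⟩ := ih y z u (by simp at hu ⊢; tauto)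
        (by simp at hnd ⊢; tauto) hpc.2 h
      exact ⟨z :: t', (List.Perm.swap z u t).trans (hperm.cons z), hpc.1, hpc'⟩

lemma insert_many (c : Fin n → Fin n → ℕ) (hsym : ∀ u v, c u v = c v u)
    (hmono : MonoC3Free n c) (a b : Fin n) :
    ∀ (ts l : List (Fin n)), PCl c (a :: b :: l) → (ts ++ (a :: b :: l)).Nodup →
    (∀ u ∈ ts, c u b ≠ c a b) →
    ∃ l', (ts ++ l).Perm l' ∧ PCl c (a :: b :: l') := by
  intro ts
  induction ts with
  | nil => intro l hpc _ _; exact ⟨l, List.Perm.refl _, hpc⟩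
  | cons u ts' ih =>
    intro l hpc hnd hcond
    have hnd' := List.nodup_cons.mp (hnd : (u :: (ts' ++ (a :: b :: l))).Nodup)
    have hu : u ∉ (a :: b :: l) := fun h => hnd'.1 (List.mem_append_right _ h)
    have hndabl : (a :: b :: l).Nodup := (List.nodup_append.mp hnd'.2).2.1
    obtain ⟨l₁, hperm₁, hpc₁⟩ := insert_one c hsym hmono l a b u hu hndabl hpc
      (hcond u List.mem_cons_self)
    have huabl : (u :: a :: b :: l).Perm (a :: b :: l₁) :=
      ((List.Perm.swap a u (b :: l)).trans
        ((List.Perm.swap b u l).cons a)).trans ((hperm₁.cons b).cons a)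
    have hbig : ((u :: ts') ++ (a :: b :: l)).Perm (ts' ++ (a :: b :: l₁)) :=
      (List.perm_middle.symm).trans (List.Perm.append_left ts' huabl)
    obtain ⟨l', hperm', hpc'⟩ := ih l₁ hpc₁ (hbig.nodup hnd)
      (fun w hw => hcond w (List.mem_cons_of_mem u hw))
    refine ⟨l', ?_, hpc'⟩
    exact (List.perm_middle.symm.trans
      (List.Perm.append_left ts' hperm₁)).trans hperm'


/-- Master lemma: a mono-C3-free complete graph has a PC hamiltonian path of `s`
starting at `a` (first color `≠ α`) or at `b` (first color `≠ β`), provided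
`c a b ∉ {α, β}`. -/
lemma master (c : Fin n → Fin n → ℕ) (hsym : ∀ u v, c u v = c v u)
    (hmono : MonoC3Free n c) :
    ∀ (m : ℕ) (s : Finset (Fin n)) (a b : Fin n) (α β : ℕ), s.card ≤ m →
    a ∈ s → b ∈ s → a ≠ b → c a b ≠ α → c a b ≠ β →
    ∃ (p q : Fin n) (l : List (Fin n)), (p :: q :: l).Nodup ∧
      (p :: q :: l).toFinset = s ∧ PCl c (p :: q :: l) ∧
      ((p = a ∧ c a q ≠ α) ∨ (p = b ∧ c b q ≠ β)) := by
  intro m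
  induction m with
  | zero =>
    intro s a b α β hcard ha _ _ _ _
    exact absurd (Finset.card_pos.mpr ⟨a, ha⟩) (by omega)
  | succ m ih =>
    intro s a b α β hcard ha hb hab hα hβ
    by_cases hex : ∃ w ∈ s, w ≠ a ∧ w ≠ b ∧ c b w = c a b
    · obtain ⟨w, hws, hwa, hwb, hcw⟩ := hex
      have hcaw : c a w ≠ c a b := by
        intro he
        exact hmono a b w hab (Ne.symm hwb) (Ne.symm hwa)
          ⟨by rw [← hcw, hsym b w], he.symm⟩
      have hcard' : (s.erase b).card ≤ m := by
        have := Finset.card_erase_of_mem hb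
        omega
      obtain ⟨p, q, l, hnd, hts, hpc, hcase⟩ := ih (s.erase b) a w (c a b) (c a b)
        hcard' (Finset.mem_erase.mpr ⟨hab, ha⟩) (Finset.mem_erase.mpr ⟨hwb, hws⟩)
        (Ne.symm hwa) hcaw hcaw
      have hbp : c b p = c a b := by
        rcases hcase with ⟨rfl, _⟩ | ⟨rfl, _⟩
        · rw [hsym b p]
        · exact hcw
      have hpq : c p q ≠ c a b := by
        rcases hcase with ⟨rfl, h⟩ | ⟨rfl, h⟩ <;> exact h
      refine ⟨b, p, q :: l, ?_, ?_, ?_, ?_⟩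
      · refine List.nodup_cons.mpr ⟨?_, hnd⟩
        intro hbmem
        have : b ∈ s.erase b := hts ▸ List.mem_toFinset.mpr hbmem
        exact (Finset.mem_erase.mp this).1 rfl
      · rw [List.toFinset_cons, hts, Finset.insert_erase hb]
      · exact ⟨by rw [hbp]; exact fun h => hpq h.symm, hpc⟩
      · exact Or.inr ⟨rfl, by rw [hbp]; exact hβ⟩
    · rw [not_exists] at hex
      simp only [not_and, not_exists] at hex
      have hcond : ∀ u ∈ ((s.erase b).erase a).toList, c u b ≠ c a b := by
        intro u hu
        have hu' := Finset.mem_toList.mp hu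
        have hua := (Finset.mem_erase.mp hu').1
        have hu'' := (Finset.mem_erase.mp hu').2
        have hub := (Finset.mem_erase.mp hu'').1
        have hus := (Finset.mem_erase.mp hu'').2
        intro he
        exact hex u hus hua hub (by rw [hsym b u]; exact he)
      have hnd : (((s.erase b).erase a).toList ++ (a :: b :: [])).Nodup := by
        rw [List.nodup_append]
        refine ⟨Finset.nodup_toList _, by simp [hab], ?_⟩
        intro x hx
        have hx' := Finset.mem_toList.mp hx
        have hxa := (Finset.mem_erase.mp hx').1
        have hxb := (Finset.mem_erase.mp (Finset.mem_erase.mp hx').2).1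
        simp [List.mem_cons, hxa, hxb]
      obtain ⟨l', hperm, hpc⟩ := insert_many c hsym hmono a b
        ((s.erase b).erase a).toList [] (by simp) hnd hcond
      rw [List.append_nil] at hperm
      refine ⟨a, b, l', ?_, ?_, hpc, Or.inl ⟨rfl, hα⟩⟩
      · refine List.nodup_cons.mpr ⟨?_, List.nodup_cons.mpr ⟨?_, ?_⟩⟩
        · intro hmem
          rcases List.mem_cons.mp hmem with h | h
          · exact hab h
          · have : a ∈ ((s.erase b).erase a).toList :=
              (hperm.symm.mem_iff).mp (by simpa using h)
            exact (Finset.mem_erase.mp (Finset.mem_toList.mp this)).1 rfl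
        · intro hmem
          have : b ∈ ((s.erase b).erase a).toList :=
            (hperm.symm.mem_iff).mp hmem
          exact (Finset.mem_erase.mp
            (Finset.mem_erase.mp (Finset.mem_toList.mp this)).2).1 rfl
        · exact hperm.nodup (Finset.nodup_toList _)
      · have hl' : l'.toFinset = (s.erase b).erase a := by
          rw [← Finset.toList_toFinset ((s.erase b).erase a)]
          exact List.toFinset_eq_of_perm _ _ (by simpa using hperm.symm)
        rw [List.toFinset_cons, List.toFinset_cons, hl']
        rw [show (s.erase b).erase a = (s.erase a).erase b from Finset.erase_right_comm]
        rw [Finset.insert_erase (Finset.mem_erase.mpr ⟨Ne.symm hab, hb⟩),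
          Finset.insert_erase ha]


lemma pcl_getD (c : Fin n → Fin n → ℕ) (d : Fin n) :
    ∀ l : List (Fin n), PCl c l → ∀ j : ℕ, j + 2 < l.length →
    c (l.getD j d) (l.getD (j+1) d) ≠ c (l.getD (j+1) d) (l.getD (j+2) d) := by
  intro l
  induction l with
  | nil => intro _ j hj; simp at hj
  | cons x t ih =>
    intro hpc j hj
    match t, hpc, hj with
    | [], _, hj => simp at hj
    | [y], _, hj => simp at hj
    | y :: z :: t'', hpc, hj =>
      cases j with
      | zero =>
        simp only [List.getD_cons_zero, List.getD_cons_succ]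
        exact hpc.1
      | succ j' =>
        simp only [List.getD_cons_succ]
        exact ih hpc.2 j' (by simp at hj ⊢; omega)

end PCAux

/-- Let `k ≥ 3` and let `G` be a mono-`C3`-free edge-colored `K_n`.
Let `ℓ 1 ≥ ℓ 2 ≥ ⋯ ≥ ℓ k ≥ 1` with `ℓ 1 ≥ 2` and `ℓ 1 + ⋯ + ℓ k = n - 1`.  If `G`
contains a nice octopus `O*_{ℓ 2, …, ℓ k}` — a properly colored spider with center `v`
and `k - 1` legs `M i` of lengths `ℓ i` (`2 ≤ i ≤ k`) together with a triangle `v a b`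
disjoint from the legs such that `ab` is a center edge of the triangle and, for each
leg, the triangle together with that leg forms a nice shovel (the color of the first
leg edge differs from the colors of both triangle edges at `v`) — then `G` contains a
properly colored spanning spider with legs of lengths `ℓ 1, ℓ 2, …, ℓ k`. -/
theorem pc_spider_of_nice_octopus (k n : ℕ) (hk : 3 ≤ k) (c : Fin n → Fin n → ℕ)
    (hsym : ∀ u v, c u v = c v u) (hmono : MonoC3Free n c)
    (ℓ : ℕ → ℕ)
    (hpos : ∀ i, 1 ≤ i → i ≤ k → 1 ≤ ℓ i)
    (hdec : ∀ i j, 1 ≤ i → i ≤ j → j ≤ k → ℓ j ≤ ℓ i)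
    (hl1 : 2 ≤ ℓ 1)
    (hsum : ∑ i ∈ Finset.Icc 1 k, ℓ i = n - 1)
    (hoct : ∃ (v a b : Fin n) (M : ℕ → ℕ → Fin n),
      a ≠ b ∧ a ≠ v ∧ b ≠ v ∧
      (∀ i, 2 ≤ i → i ≤ k → M i 0 = v) ∧
      (∀ i, 2 ≤ i → i ≤ k → Set.InjOn (M i) (Set.Iic (ℓ i))) ∧
      (∀ i i', 2 ≤ i → i ≤ k → 2 ≤ i' → i' ≤ k → i ≠ i' →
        ∀ j j', 1 ≤ j → j ≤ ℓ i → 1 ≤ j' → j' ≤ ℓ i' → M i j ≠ M i' j') ∧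
      (∀ i, 2 ≤ i → i ≤ k → ∀ j ≤ ℓ i, M i j ≠ a ∧ M i j ≠ b) ∧
      (∀ i, 2 ≤ i → i ≤ k → ∀ j : ℕ, j + 2 ≤ ℓ i →
        c (M i j) (M i (j + 1)) ≠ c (M i (j + 1)) (M i (j + 2))) ∧
      (∀ i i', 2 ≤ i → i ≤ k → 2 ≤ i' → i' ≤ k → i ≠ i' → c v (M i 1) ≠ c v (M i' 1)) ∧
      c a b ≠ c v a ∧ c a b ≠ c v b ∧
      (∀ i, 2 ≤ i → i ≤ k → c v (M i 1) ≠ c v a ∧ c v (M i 1) ≠ c v b)) :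
    ∃ (v : Fin n) (L : ℕ → ℕ → Fin n), IsPCSpanningSpider n k c ℓ v L := by
  classical
  obtain ⟨v, a, b, M, hab, hav, hbv, hM0, hMinj, hMdisj, hMab, hMpc, hMcol,
    hcab1, hcab2, hshov⟩ := hoct
  have hn : 0 < n := Fin.pos v
  set B : ℕ → Finset (Fin n) := fun i => (Finset.Icc 1 (ℓ i)).image (M i) with hB
  set T : Finset (Fin n) := insert v ((Finset.Icc 2 k).biUnion B) with hT
  set s : Finset (Fin n) := Finset.univ \ T with hs
  -- membership in T characterization helpers
  have hMinT : ∀ i, 2 ≤ i → i ≤ k → ∀ j, 1 ≤ j → j ≤ ℓ i → M i j ∈ T := by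
    intro i h2 hik j h1 hj
    exact Finset.mem_insert_of_mem (Finset.mem_biUnion.mpr
      ⟨i, Finset.mem_Icc.mpr ⟨h2, hik⟩, Finset.mem_image.mpr
        ⟨j, Finset.mem_Icc.mpr ⟨h1, hj⟩, rfl⟩⟩)
  have hvnotB : ∀ i ∈ Finset.Icc 2 k, v ∉ B i := by
    intro i hi hmem
    obtain ⟨j, hj, hMij⟩ := Finset.mem_image.mp hmem
    obtain ⟨hj1, hj2⟩ := Finset.mem_Icc.mp hj
    obtain ⟨h2, hik⟩ := Finset.mem_Icc.mp hi
    have h0 : M i 0 = v := hM0 i h2 hik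
    have : j = 0 := hMinj i h2 hik (Set.mem_Iic.mpr hj2)
      (Set.mem_Iic.mpr (Nat.zero_le _)) (hMij.trans h0.symm)
    omega
  have hanotT : a ∉ T := by
    intro hmem
    rcases Finset.mem_insert.mp hmem with h | h
    · exact hav h
    · obtain ⟨i, hi, hmem'⟩ := Finset.mem_biUnion.mp h
      obtain ⟨j, hj, hMij⟩ := Finset.mem_image.mp hmem'
      obtain ⟨h2, hik⟩ := Finset.mem_Icc.mp hi
      exact (hMab i h2 hik j (Finset.mem_Icc.mp hj).2).1 hMij
  have hbnotT : b ∉ T := by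
    intro hmem
    rcases Finset.mem_insert.mp hmem with h | h
    · exact hbv h
    · obtain ⟨i, hi, hmem'⟩ := Finset.mem_biUnion.mp h
      obtain ⟨j, hj, hMij⟩ := Finset.mem_image.mp hmem'
      obtain ⟨h2, hik⟩ := Finset.mem_Icc.mp hi
      exact (hMab i h2 hik j (Finset.mem_Icc.mp hj).2).2 hMij
  have has : a ∈ s := Finset.mem_sdiff.mpr ⟨Finset.mem_univ a, hanotT⟩
  have hbs : b ∈ s := Finset.mem_sdiff.mpr ⟨Finset.mem_univ b, hbnotT⟩
  have hvs : v ∉ s := fun h => (Finset.mem_sdiff.mp h).2 (Finset.mem_insert_self v _)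
  -- cardinality of s
  have hcardB : ∀ i, 2 ≤ i → i ≤ k → (B i).card = ℓ i := by
    intro i h2 hik
    rw [hB]
    rw [Finset.card_image_of_injOn (fun x hx y hy hxy => hMinj i h2 hik
      (Set.mem_Iic.mpr (Finset.mem_Icc.mp hx).2) (Set.mem_Iic.mpr (Finset.mem_Icc.mp hy).2) hxy)]
    rw [Nat.card_Icc]
    omega
  have hTcard : T.card = 1 + ∑ i ∈ Finset.Icc 2 k, ℓ i := by
    rw [hT, Finset.card_insert_of_notMem (fun h => by
      obtain ⟨i, hi, hmem⟩ := Finset.mem_biUnion.mp h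
      exact hvnotB i hi hmem)]
    rw [Finset.card_biUnion (fun i hi i' hi' hne => by
      rw [Function.onFun, Finset.disjoint_left]
      intro x hx hx'
      obtain ⟨j, hj, hMij⟩ := Finset.mem_image.mp hx
      obtain ⟨j', hj', hMij'⟩ := Finset.mem_image.mp hx'
      obtain ⟨h2, hik⟩ := Finset.mem_Icc.mp hi
      obtain ⟨h2', hik'⟩ := Finset.mem_Icc.mp hi'
      exact hMdisj i i' h2 hik h2' hik' hne j j' (Finset.mem_Icc.mp hj).1
        (Finset.mem_Icc.mp hj).2 (Finset.mem_Icc.mp hj').1 (Finset.mem_Icc.mp hj').2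
        (hMij.trans hMij'.symm))]
    rw [Finset.sum_congr rfl (fun i hi => hcardB i (Finset.mem_Icc.mp hi).1
      (Finset.mem_Icc.mp hi).2)]
    have heq : ((Finset.Icc 2 k).sum ℓ) = ∑ i ∈ Finset.Icc 2 k, ℓ i := rfl
    omega
  have hsumsplit : ℓ 1 + ∑ i ∈ Finset.Icc 2 k, ℓ i = n - 1 := by
    have h1 : Finset.Icc 1 k = insert 1 (Finset.Icc 2 k) := by
      ext x
      simp only [Finset.mem_Icc, Finset.mem_insert]
      omega
    rw [h1, Finset.sum_insert (by simp)] at hsum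
    exact hsum
  have hscard : s.card = ℓ 1 := by
    have h1 : s.card = n - T.card := by
      rw [hs, Finset.card_sdiff_of_subset (Finset.subset_univ T), Finset.card_univ, Fintype.card_fin]
    have h2 : T.card ≤ n := by
      calc T.card ≤ Finset.univ.card := Finset.card_le_card (Finset.subset_univ T)
      _ = n := by rw [Finset.card_univ, Fintype.card_fin]
    have heq : ((Finset.Icc 2 k).sum ℓ) = ∑ i ∈ Finset.Icc 2 k, ℓ i := rfl
    omega
  -- apply the master lemma
  obtain ⟨p, q, l, hnd, hts, hpc, hcase⟩ := PCAux.master c hsym hmono s.card s a b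
    (c v a) (c v b) le_rfl has hbs hab hcab1 hcab2
  have hlen : (p :: q :: l).length = ℓ 1 := by
    rw [← List.toFinset_card_of_nodup hnd, hts, hscard]
  set leg : List (Fin n) := v :: p :: q :: l with hleg
  have hleglen : leg.length = ℓ 1 + 1 := by rw [hleg]; simp at hlen ⊢; omega
  have hvnot : v ∉ (p :: q :: l) := fun h => hvs (hts ▸ List.mem_toFinset.mpr h)
  have hlegnd : leg.Nodup := List.nodup_cons.mpr ⟨hvnot, hnd⟩
  have hlegpc : PCAux.PCl c leg := by
    refine ⟨?_, hpc⟩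
    rcases hcase with ⟨rfl, h⟩ | ⟨rfl, h⟩
    · exact fun he => h he.symm
    · exact fun he => h he.symm
  have hpab : p = a ∨ p = b := by
    rcases hcase with ⟨rfl, _⟩ | ⟨rfl, _⟩
    · exact Or.inl rfl
    · exact Or.inr rfl
  set L : ℕ → ℕ → Fin n := fun i j => if i = 1 then leg.getD j v else M i j with hL
  have hL1 : ∀ j, L 1 j = leg.getD j v := fun j => if_pos rfl
  have hLi : ∀ i, i ≠ 1 → ∀ j, L i j = M i j := fun i hi j => if_neg hi
  -- membership of leg elements
  have hlegmem : ∀ j, 1 ≤ j → j ≤ ℓ 1 → leg.getD j v ∈ s := by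
    intro j h1 hj
    obtain ⟨j', rfl⟩ : ∃ j', j = j' + 1 := ⟨j - 1, by omega⟩
    rw [hleg, List.getD_cons_succ]
    have hj' : j' < (p :: q :: l).length := by omega
    rw [List.getD_eq_getElem _ _ hj']
    exact hts ▸ List.mem_toFinset.mpr (List.getElem_mem hj')
  refine ⟨v, L, ?_, ?_, ?_, ?_, ?_, ?_⟩
  · -- legs start at v
    intro i h1 hik
    by_cases hi : i = 1
    · subst hi; rw [hL1]; rfl
    · rw [hLi i hi]; exact hM0 i (by omega) hik
  · -- injectivity on each leg
    intro i h1 hik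
    by_cases hi : i = 1
    · subst hi
      intro j1 hj1 j2 hj2 he
      rw [hL1, hL1] at he
      have h1' : j1 < leg.length := by
        have := Set.mem_Iic.mp hj1; omega
      have h2' : j2 < leg.length := by
        have := Set.mem_Iic.mp hj2; omega
      rw [List.getD_eq_getElem _ _ h1', List.getD_eq_getElem _ _ h2'] at he
      exact (List.Nodup.getElem_inj_iff hlegnd).mp he
    · intro j1 hj1 j2 hj2 he
      rw [hLi i hi, hLi i hi] at he
      exact hMinj i (by omega) hik hj1 hj2 he
  · -- legs pairwise disjoint away from center
    intro i i' h1 hik h1' hik' hne j j' hj1 hj2 hj1' hj2'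
    by_cases hi : i = 1
    · subst hi
      have hi' : i' ≠ 1 := fun h => hne h.symm
      rw [hL1, hLi i' hi']
      intro he
      have hjs : leg.getD j v ∈ s := hlegmem j hj1 hj2
      have : M i' j' ∈ T := hMinT i' (by omega) hik' j' hj1' hj2'
      exact (Finset.mem_sdiff.mp hjs).2 (he ▸ this)
    · by_cases hi' : i' = 1
      · subst hi'
        rw [hLi i hi, hL1]
        intro he
        have hjs : leg.getD j' v ∈ s := hlegmem j' hj1' hj2'
        have : M i j ∈ T := hMinT i (by omega) hik j hj1 hj2
        exact (Finset.mem_sdiff.mp hjs).2 (he ▸ this)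
      · rw [hLi i hi, hLi i' hi']
        exact hMdisj i i' (by omega) hik (by omega) hik' hne j j' hj1 hj2 hj1' hj2'
  · -- spanning
    intro x
    by_cases hx : x ∈ T
    · rcases Finset.mem_insert.mp hx with h | h
      · refine ⟨1, 0, le_rfl, by omega, Nat.zero_le _, ?_⟩
        rw [hL1]
        subst h
        rfl
      · obtain ⟨i, hi, hmem⟩ := Finset.mem_biUnion.mp h
        obtain ⟨j, hj, hMij⟩ := Finset.mem_image.mp hmem
        obtain ⟨h2, hik⟩ := Finset.mem_Icc.mp hi
        exact ⟨i, j, by omega, hik, (Finset.mem_Icc.mp hj).2,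
          by rw [hLi i (by omega)]; exact hMij⟩
    · have hxs : x ∈ s := Finset.mem_sdiff.mpr ⟨Finset.mem_univ x, hx⟩
      have hxl : x ∈ (p :: q :: l) := List.mem_toFinset.mp (hts ▸ hxs)
      obtain ⟨idx, hidx, hget⟩ := List.mem_iff_getElem.mp hxl
      refine ⟨1, idx + 1, le_rfl, by omega, by omega, ?_⟩
      rw [hL1, hleg, List.getD_cons_succ, List.getD_eq_getElem _ _ hidx]
      exact hget
  · -- properly colored legs
    intro i h1 hik j hj
    by_cases hi : i = 1
    · subst hi
      rw [hL1, hL1, hL1]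
      exact PCAux.pcl_getD c v leg hlegpc j (by omega)
    · rw [hLi i hi, hLi i hi, hLi i hi]
      exact hMpc i (by omega) hik j hj
  · -- distinct colors at the center
    intro i i' h1 hik h1' hik' hne
    by_cases hi : i = 1
    · subst hi
      have hi' : i' ≠ 1 := fun h => hne h.symm
      rw [hL1, hLi i' hi']
      have hp : leg.getD 1 v = p := by rw [hleg]; rfl
      rw [hp]
      have := hshov i' (by omega) hik'
      rcases hpab with rfl | rfl
      · exact fun h => this.1 h.symm
      · exact fun h => this.2 h.symm
    · by_cases hi' : i' = 1
      · subst hi'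
        rw [hLi i hi, hL1]
        have hp : leg.getD 1 v = p := by rw [hleg]; rfl
        rw [hp]
        have := hshov i (by omega) hik
        rcases hpab with rfl | rfl
        · exact this.1
        · exact this.2
      · rw [hLi i hi, hLi i' hi']
        exact hMcol i i' (by omega) hik (by omega) hik' hne
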